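/- Let (A,B) be a separation of the r-grid of order s such that B contains a cross. Let I be the set of row indices meeting A and J the set of column indices meeting A. Then |I| ≤ s and |J| ≤ s. -/

import Mathlib

/-- The `r`-grid. -/
def gridGraph (r : ℕ) : SimpleGraph (Fin r × Fin r) where
  Adj v w := Nat.dist v.1.val w.1.val + Nat.dist v.2.val w.2.val = 1
  symm := by
    constructor
    intro v w h
    simpa [Nat.dist_comm] using h
  loopless := by
    constructor
    intro v h
    simp [Nat.dist_self] at h

/-- `(A,B)` is a separation of `G`. -/
def IsSeparation {V : Type*} [Fintype V] [DecidableEq V]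
    (G : SimpleGraph V) (A B : Finset V) : Prop :=
  A ∪ B = Finset.univ ∧
    ∀ a ∈ A, a ∉ B → ∀ b ∈ B, b ∉ A → ¬ G.Adj a b

/-- `B` contains all vertices of some cross. -/
def ContainsCross {r : ℕ} (B : Finset (Fin r × Fin r)) : Prop :=
  ∃ i j : Fin r, ∀ v : Fin r × Fin r, v.1 = i ∨ v.2 = j → v ∈ B

/-- For a separation `(A,B)` of the `r`-grid of order `s` whose big side
contains a cross, the set `I` of row indices meeting `A` and the set `J` of
column indices meeting `A` both have size at most `s`. -/

lemma one_dim {r : ℕ} (pA pB : Fin r → Prop) (hun : ∀ k, pA k ∨ pB k)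
    (hstep : ∀ k k' : Fin r, Nat.dist k.val k'.val = 1 → pA k → ¬ pB k → pB k' → pA k') :
    ∀ n (j j' : Fin r), Nat.dist j.val j'.val ≤ n → pA j → pB j' →
      ∃ k, pA k ∧ pB k := by
  intro n
  induction n with
  | zero =>
    intro j j' hd hA hB
    have : j = j' := Fin.ext (Nat.eq_of_dist_eq_zero (Nat.le_zero.1 hd))
    exact ⟨j, hA, this ▸ hB⟩
  | succ n ih =>
    intro j j' hd hA hB
    by_cases hjB : pB j
    · exact ⟨j, hA, hjB⟩
    have hne : j.val ≠ j'.val := fun h => hjB (by rwa [Fin.ext h] )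
    -- move one step toward j'
    rcases lt_or_gt_of_ne hne with hlt | hgt
    · have hlt' : j.val + 1 < r := lt_of_le_of_lt hlt j'.isLt
      set j₁ : Fin r := ⟨j.val + 1, hlt'⟩ with hj₁
      have hd1 : Nat.dist j.val j₁.val = 1 := by simp [Nat.dist, hj₁]
      have hA1 : pA j₁ := by
        rcases hun j₁ with h | h
        · exact h
        · exact hstep j j₁ hd1 hA hjB h
      have : Nat.dist j₁.val j'.val ≤ n := by
        simp [Nat.dist, hj₁] at hd ⊢; omega
      exact ih j₁ j' this hA1 hB
    · have hpos : 0 < j.val := Nat.pos_of_ne_zero (by omega)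
      set j₁ : Fin r := ⟨j.val - 1, by omega⟩ with hj₁
      have hd1 : Nat.dist j.val j₁.val = 1 := by simp [Nat.dist, hj₁]; omega
      have hA1 : pA j₁ := by
        rcases hun j₁ with h | h
        · exact h
        · exact hstep j j₁ hd1 hA hjB h
      have : Nat.dist j₁.val j'.val ≤ n := by
        simp [Nat.dist, hj₁] at hd ⊢; omega
      exact ih j₁ j' this hA1 hB

theorem rows_and_cols_meeting_small_side (r : ℕ) (A B : Finset (Fin r × Fin r))
    (hsep : IsSeparation (gridGraph r) A B) (hcross : ContainsCross B) :
    (Finset.univ.filter fun i : Fin r => ∃ j : Fin r, (i, j) ∈ A).card ≤ (A ∩ B).card ∧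
    (Finset.univ.filter fun j : Fin r => ∃ i : Fin r, (i, j) ∈ A).card ≤ (A ∩ B).card := by
  obtain ⟨huniv, hsep2⟩ := hsep
  obtain ⟨i₀, j₀, hcr⟩ := hcross
  have hmem : ∀ v : Fin r × Fin r, v ∈ A ∨ v ∈ B := fun v =>
    Finset.mem_union.1 (huniv ▸ Finset.mem_univ v)
  constructor
  · have key : ∀ i : Fin r, (∃ j : Fin r, (i, j) ∈ A) → ∃ k, (i, k) ∈ A ∩ B := by
      intro i ⟨j, hj⟩
      have hB0 : (i, j₀) ∈ B := hcr _ (Or.inr rfl)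
      obtain ⟨k, hkA, hkB⟩ := one_dim (fun k => (i, k) ∈ A) (fun k => (i, k) ∈ B)
        (fun k => hmem (i, k))
        (fun k k' hd hA hnB hB' => by
          by_contra hnA'
          exact hsep2 (i, k) hA hnB (i, k') hB' hnA'
            (by simp [gridGraph, Nat.dist_self, hd]))
        (Nat.dist j.val j₀.val) j j₀ le_rfl hj hB0
      exact ⟨k, Finset.mem_inter.2 ⟨hkA, hkB⟩⟩
    choose! f hf using key
    apply Finset.card_le_card_of_injOn (fun i => (i, f i))
    · intro i hi
      exact hf i (by simpa using hi)
    · intro a _ b _ h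
      exact (Prod.mk.injEq _ _ _ _ ▸ h).1
  · have key : ∀ j : Fin r, (∃ i : Fin r, (i, j) ∈ A) → ∃ k, (k, j) ∈ A ∩ B := by
      intro j ⟨i, hi⟩
      have hB0 : (i₀, j) ∈ B := hcr _ (Or.inl rfl)
      obtain ⟨k, hkA, hkB⟩ := one_dim (fun k => (k, j) ∈ A) (fun k => (k, j) ∈ B)
        (fun k => hmem (k, j))
        (fun k k' hd hA hnB hB' => by
          by_contra hnA'
          exact hsep2 (k, j) hA hnB (k', j) hB' hnA'
            (by simp [gridGraph, Nat.dist_self, hd]))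
        (Nat.dist i.val i₀.val) i i₀ le_rfl hi hB0
      exact ⟨k, Finset.mem_inter.2 ⟨hkA, hkB⟩⟩
    choose! f hf using key
    apply Finset.card_le_card_of_injOn (fun j => (f j, j))
    · intro j hj
      exact hf j (by simpa using hj)
    · intro a _ b _ h
      exact (Prod.mk.injEq _ _ _ _ ▸ h).2
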